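/- arXiv:1901.03152 — 2 statements merged into one kernel-verified Lean document; each statement's English description precedes it below -/
import Mathlib

section
/- Let G₁ and G₂ be arbitrary groups and H ≤ G₁ × G₂ a subgroup. Then there exist a set I, binary relational systems S₁ and S₂ over I, and a morphism of I-systems φ : S₁ → S₂ such that Aut_I(S₁) ≅ G₁, Aut_I(S₂) ≅ G₂ and Aut_I(φ) ≅ H. -/
/-- The automorphism group of a binary relational system `R` over a label set `I`,
as a subgroup of the permutations of the vertex set. -/
def relAut {I V : Type*} (R : I → V → V → Prop) : Subgroup (Equiv.Perm V) where
  carrier := {e | ∀ i v w, R i v w ↔ R i (e v) (e w)}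
  one_mem' := by intro i v w; simp
  mul_mem' := by
    intro a b ha hb i v w
    simpa [Equiv.Perm.mul_apply] using (hb i v w).trans (ha i (b v) (b w))
  inv_mem' := by
    intro a ha i v w
    simpa [Equiv.Perm.coe_inv, Equiv.apply_symm_apply] using (ha i (a⁻¹ v) (a⁻¹ w)).symm

/-- The automorphism group of a morphism of binary relational systems, i.e. the subgroup of
`Aut(R₁) × Aut(R₂)` of pairs commuting with `f`. -/
def relArrowAut {I V₁ V₂ : Type*} (R₁ : I → V₁ → V₁ → Prop) (R₂ : I → V₂ → V₂ → Prop)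
    (f : V₁ → V₂) : Subgroup (relAut R₁ × relAut R₂) where
  carrier := {p | ∀ v, f ((p.1 : Equiv.Perm V₁) v) = (p.2 : Equiv.Perm V₂) (f v)}
  one_mem' := by intro v; simp
  mul_mem' := by
    intro a b ha hb v
    simp only [Prod.fst_mul, Prod.snd_mul, Subgroup.coe_mul, Equiv.Perm.mul_apply]
    rw [ha ((b.1 : Equiv.Perm V₁) v), hb v]
  inv_mem' := by
    intro a ha v
    simp only [Prod.fst_inv, Prod.snd_inv, Subgroup.coe_inv]
    have h := ha ((a.1 : Equiv.Perm V₁)⁻¹ v)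
    simp only [Equiv.Perm.coe_inv, Equiv.apply_symm_apply] at h ⊢
    rw [h, Equiv.symm_apply_apply]

/-- The automorphism group of a simple graph, as a subgroup of the permutations of the
vertex set. -/
def graphAut {V : Type*} (G : SimpleGraph V) : Subgroup (Equiv.Perm V) where
  carrier := {e | ∀ v w, G.Adj v w ↔ G.Adj (e v) (e w)}
  one_mem' := by intro v w; simp
  mul_mem' := by
    intro a b ha hb v w
    simpa [Equiv.Perm.mul_apply] using (hb v w).trans (ha (b v) (b w))
  inv_mem' := by
    intro a ha v w
    simpa [Equiv.Perm.coe_inv, Equiv.apply_symm_apply] using (ha (a⁻¹ v) (a⁻¹ w)).symm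

/-- The automorphism group of a graph homomorphism, i.e. the subgroup of
`Aut(Γ₁) × Aut(Γ₂)` of pairs commuting with `f`. -/
def graphArrowAut {V₁ V₂ : Type*} (Γ₁ : SimpleGraph V₁) (Γ₂ : SimpleGraph V₂)
    (f : V₁ → V₂) : Subgroup (graphAut Γ₁ × graphAut Γ₂) where
  carrier := {p | ∀ v, f ((p.1 : Equiv.Perm V₁) v) = (p.2 : Equiv.Perm V₂) (f v)}
  one_mem' := by intro v; simp
  mul_mem' := by
    intro a b ha hb v
    simp only [Prod.fst_mul, Prod.snd_mul, Subgroup.coe_mul, Equiv.Perm.mul_apply]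
    rw [ha ((b.1 : Equiv.Perm V₁) v), hb v]
  inv_mem' := by
    intro a ha v
    simp only [Prod.fst_inv, Prod.snd_inv, Subgroup.coe_inv]
    have h := ha ((a.1 : Equiv.Perm V₁)⁻¹ v)
    simp only [Equiv.Perm.coe_inv, Equiv.apply_symm_apply] at h ⊢
    rw [h, Equiv.symm_apply_apply]

universe u

section Aux
variable {G₁ G₂ : Type u} [Group G₁] [Group G₂] (H : Subgroup (G₁ × G₂))

/-- Relations on `V₁ = G₁`: labels `inl (inl g)` give left-multiplication edges. -/
def arrR₁ (G₂ : Type u) : ((G₁ ⊕ G₂) ⊕ G₁) → G₁ → G₁ → Prop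
  | .inl (.inl g) => fun v w => w = g * v
  | _ => fun _ _ => False

/-- Relations on `V₂ = G₂ ⊕ (G₁×G₂)⧸H`. -/
def arrR₂ : ((G₁ ⊕ G₂) ⊕ G₁) → (G₂ ⊕ ((G₁ × G₂) ⧸ H)) → (G₂ ⊕ ((G₁ × G₂) ⧸ H)) → Prop
  | .inl (.inl g) => fun x y => match x, y with
      | .inr c, .inr c' => c' = ((g, (1 : G₂)) : G₁ × G₂) • c
      | _, _ => False
  | .inl (.inr h) => fun x y => match x, y with
      | .inl v, .inl w => w = h * v
      | _, _ => False
  | .inr g => fun x y => match x, y with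
      | .inl v, .inr c => c = (QuotientGroup.mk (g, v⁻¹) : (G₁ × G₂) ⧸ H)
      | _, _ => False

def arrPhi : G₁ → (G₂ ⊕ ((G₁ × G₂) ⧸ H)) := fun g => .inr (QuotientGroup.mk (g, 1))

/-- The canonical automorphism of `R₁` attached to `a : G₁` (right mult by `a⁻¹`). -/
def jperm₁ (a : G₁) : Equiv.Perm G₁ := Equiv.mulRight a⁻¹

lemma jperm₁_mem (a : G₁) : jperm₁ a ∈ relAut (arrR₁ (G₁ := G₁) G₂) := by
  intro i v w
  rcases i with (g | h) | g
  · show w = g * v ↔ w * a⁻¹ = g * (v * a⁻¹)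
    rw [← mul_assoc, mul_left_inj]
  · exact Iff.rfl
  · exact Iff.rfl

lemma relAut₁_apply {e : Equiv.Perm G₁} (he : e ∈ relAut (arrR₁ (G₁ := G₁) G₂)) (x : G₁) :
    e x = x * e 1 := by
  have := (he (.inl (.inl x)) 1 x).mp (by simp [arrR₁])
  simpa [arrR₁] using this

lemma relAut₁_eq {e : Equiv.Perm G₁} (he : e ∈ relAut (arrR₁ (G₁ := G₁) G₂)) :
    e = jperm₁ ((e 1)⁻¹) := by
  ext x; simp [jperm₁, relAut₁_apply (G₂ := G₂) he x]

/-- The canonical automorphism of `R₂` attached to `b : G₂`. -/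
def jperm₂ (b : G₂) : Equiv.Perm (G₂ ⊕ ((G₁ × G₂) ⧸ H)) :=
  Equiv.sumCongr (Equiv.mulRight b⁻¹) (MulAction.toPerm (((1 : G₁), b) : G₁ × G₂))

@[simp] lemma jperm₂_inl (b : G₂) (y : G₂) :
    jperm₂ (G₁ := G₁) H b (.inl y) = .inl (y * b⁻¹) := rfl

@[simp] lemma jperm₂_inr (b : G₂) (c : (G₁ × G₂) ⧸ H) :
    jperm₂ (G₁ := G₁) H b (.inr c) = .inr ((((1 : G₁), b) : G₁ × G₂) • c) := rfl

lemma jperm₂_mem (b : G₂) : jperm₂ (G₁ := G₁) H b ∈ relAut (arrR₂ H) := by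
  intro i v w
  rcases i with (g | h) | g
  · rcases v with y | c <;> rcases w with y' | c'
    · exact Iff.rfl
    · exact Iff.rfl
    · exact Iff.rfl
    · show c' = ((g, (1:G₂)) : G₁ × G₂) • c ↔
        (((1:G₁), b) : G₁ × G₂) • c' = ((g, (1:G₂)) : G₁ × G₂) • (((1:G₁), b) : G₁ × G₂) • c
      have key : ((g, (1:G₂)) : G₁ × G₂) • (((1:G₁), b) : G₁ × G₂) • c
          = (((1:G₁), b) : G₁ × G₂) • ((g, (1:G₂)) : G₁ × G₂) • c := by
        rw [smul_smul, smul_smul]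
        congr 1
        ext <;> simp
      rw [key, smul_left_cancel_iff]
  · rcases v with y | c <;> rcases w with y' | c'
    · show y' = h * y ↔ y' * b⁻¹ = h * (y * b⁻¹)
      rw [← mul_assoc, mul_left_inj]
    · exact Iff.rfl
    · exact Iff.rfl
    · exact Iff.rfl
  · rcases v with y | c <;> rcases w with y' | c'
    · exact Iff.rfl
    · show c' = (QuotientGroup.mk ((g, y⁻¹) : G₁ × G₂) : (G₁ × G₂) ⧸ H) ↔
        (((1:G₁), b) : G₁ × G₂) • c'
          = (QuotientGroup.mk ((g, (y * b⁻¹)⁻¹) : G₁ × G₂) : (G₁ × G₂) ⧸ H)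
      have key : (QuotientGroup.mk ((g, (y * b⁻¹)⁻¹) : G₁ × G₂) : (G₁ × G₂) ⧸ H)
          = (((1:G₁), b) : G₁ × G₂) • QuotientGroup.mk ((g, y⁻¹) : G₁ × G₂) := by
        show _ = (QuotientGroup.mk ((((1:G₁), b) : G₁ × G₂) * (g, y⁻¹)) : (G₁ × G₂) ⧸ H)
        congr 1
        ext <;> simp [mul_inv_rev]
      rw [key, smul_left_cancel_iff]
    · exact Iff.rfl
    · exact Iff.rfl

lemma relAut₂_eq {e : Equiv.Perm (G₂ ⊕ ((G₁ × G₂) ⧸ H))} (he : e ∈ relAut (arrR₂ H)) :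
    ∃ b : G₂, e = jperm₂ H b := by
  -- first, `e (inl 1) = inl y₀` for some `y₀`
  have h1 : arrR₂ H (.inl (.inr (1 : G₂))) (.inl 1) (.inl 1) := by simp [arrR₂]
  have h1' := (he (.inl (.inr (1 : G₂))) (.inl 1) (.inl 1)).mp h1
  obtain ⟨y₀, hy₀⟩ : ∃ y₀, e (.inl 1) = .inl y₀ := by
    rcases hx : e (.inl (1 : G₂)) with y | c
    · exact ⟨y, rfl⟩
    · rw [hx] at h1'; exact absurd h1' (by simp [arrR₂])
  refine ⟨y₀⁻¹, ?_⟩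
  have hinl : ∀ y : G₂, e (.inl y) = .inl (y * y₀) := by
    intro y
    have h2 : arrR₂ H (.inl (.inr y)) (.inl 1) (.inl y) := by simp [arrR₂]
    have h2' := (he (.inl (.inr y)) (.inl 1) (.inl y)).mp h2
    rw [hy₀] at h2'
    rcases hx : e (.inl y) with y' | c
    · rw [hx] at h2'; simp only [arrR₂] at h2'; rw [h2']
    · rw [hx] at h2'; exact absurd h2' (by simp [arrR₂])
  ext x
  rcases x with y | c
  · simp [hinl y]
  · induction c using QuotientGroup.induction_on with
    | H z =>
      have h3 : arrR₂ H (.inr z.1) (.inl z.2⁻¹) (.inr (QuotientGroup.mk z)) := by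
        simp [arrR₂]
      have h3' := (he (.inr z.1) _ _).mp h3
      rw [hinl z.2⁻¹] at h3'
      rcases hx : e (.inr (QuotientGroup.mk z)) with y' | c'
      · rw [hx] at h3'; exact absurd h3' (by simp [arrR₂])
      · rw [hx] at h3'; simp only [arrR₂] at h3'
        rw [h3', jperm₂_inr]
        congr 1
        show _ = (QuotientGroup.mk ((((1:G₁), y₀⁻¹) : G₁ × G₂) * z) : (G₁ × G₂) ⧸ H)
        congr 1
        ext <;> simp [mul_inv_rev]

end Aux

section Iso
variable {G₁ G₂ : Type u} [Group G₁] [Group G₂] (H : Subgroup (G₁ × G₂))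

set_option linter.unusedSectionVars false

def hom₁ : G₁ →* relAut (arrR₁ (G₁ := G₁) G₂) where
  toFun a := ⟨jperm₁ a, jperm₁_mem a⟩
  map_one' := by
    refine Subtype.ext (Equiv.ext fun x => ?_)
    simp [jperm₁]
  map_mul' a b := by
    refine Subtype.ext (Equiv.ext fun x => ?_)
    simp [jperm₁, mul_inv_rev, mul_assoc]

lemma hom₁_bij : Function.Bijective (hom₁ (G₁ := G₁) (G₂ := G₂)) := by
  constructor
  · intro a a' hh
    have h1 : jperm₁ a = jperm₁ a' := congrArg Subtype.val hh
    have := Equiv.ext_iff.mp h1 1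
    simpa [jperm₁] using this
  · rintro ⟨e, he⟩
    exact ⟨(e 1)⁻¹, Subtype.ext (relAut₁_eq (G₂ := G₂) he).symm⟩

def hom₂ : G₂ →* relAut (arrR₂ (G₁ := G₁) (G₂ := G₂) H) where
  toFun b := ⟨jperm₂ H b, jperm₂_mem H b⟩
  map_one' := by
    refine Subtype.ext (Equiv.ext fun x => ?_)
    rcases x with y | c
    · simp
    · show Sum.inr ((((1:G₁), (1:G₂)) : G₁ × G₂) • c) = Sum.inr c
      rw [show (((1:G₁), (1:G₂)) : G₁ × G₂) = 1 from rfl, one_smul]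
  map_mul' a b := by
    refine Subtype.ext (Equiv.ext fun x => ?_)
    rcases x with y | c
    · simp [mul_inv_rev, mul_assoc]
    · show Sum.inr _ = Sum.inr _
      congr 1
      show (((1:G₁), a * b) : G₁ × G₂) • c
        = (((1:G₁), a) : G₁ × G₂) • (((1:G₁), b) : G₁ × G₂) • c
      rw [smul_smul]
      congr 1
      ext <;> simp

lemma hom₂_bij : Function.Bijective (hom₂ (G₁ := G₁) (G₂ := G₂) H) := by
  constructor
  · intro b b' hh
    have h1 : jperm₂ H b = jperm₂ H b' := congrArg Subtype.val hh
    have := Equiv.ext_iff.mp h1 (Sum.inl 1)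
    simpa using this
  · rintro ⟨e, he⟩
    obtain ⟨b, hb⟩ := relAut₂_eq H he
    exact ⟨b, Subtype.ext hb.symm⟩

lemma hom₃_comm (p : H) :
    ∀ v, arrPhi H (jperm₁ (p : G₁ × G₂).1 v) = jperm₂ H (p : G₁ × G₂).2 (arrPhi H v) := by
  intro v
  obtain ⟨⟨a, b⟩, hp⟩ := p
  show Sum.inr _ = Sum.inr _
  congr 1
  show (QuotientGroup.mk ((v * a⁻¹, 1) : G₁ × G₂) : (G₁ × G₂) ⧸ H)
    = QuotientGroup.mk ((((1:G₁), b) : G₁ × G₂) * (v, 1))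
  rw [QuotientGroup.eq]
  have : ((v * a⁻¹, (1:G₂)) : G₁ × G₂)⁻¹ * ((((1:G₁), b) : G₁ × G₂) * (v, 1)) = (a, b) := by
    ext <;> simp [mul_inv_rev, mul_assoc]
  rw [this]
  exact hp

def hom₃ : H →* relArrowAut (arrR₁ (G₁ := G₁) G₂) (arrR₂ H) (arrPhi H) where
  toFun p := ⟨(⟨jperm₁ (p : G₁ × G₂).1, jperm₁_mem _⟩, ⟨jperm₂ H (p : G₁ × G₂).2, jperm₂_mem H _⟩),
    hom₃_comm H p⟩
  map_one' := by
    refine Subtype.ext (Prod.ext (Subtype.ext ?_) (Subtype.ext ?_))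
    · exact congrArg Subtype.val (hom₁ (G₂ := G₂)).map_one'
    · exact congrArg Subtype.val (hom₂ H).map_one'
  map_mul' p q := by
    refine Subtype.ext (Prod.ext (Subtype.ext ?_) (Subtype.ext ?_))
    · exact congrArg Subtype.val ((hom₁ (G₂ := G₂)).map_mul' _ _)
    · exact congrArg Subtype.val ((hom₂ H).map_mul' _ _)

lemma hom₃_bij : Function.Bijective (hom₃ (G₁ := G₁) (G₂ := G₂) H) := by
  constructor
  · intro p q hh
    have hval := congrArg Subtype.val hh
    have h1 : jperm₁ (p : G₁ × G₂).1 = jperm₁ (q : G₁ × G₂).1 :=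
      congrArg Subtype.val (congrArg Prod.fst hval)
    have h2 : jperm₂ H (p : G₁ × G₂).2 = jperm₂ H (q : G₁ × G₂).2 :=
      congrArg Subtype.val (congrArg Prod.snd hval)
    have e1 := Equiv.ext_iff.mp h1 1
    have e2 := Equiv.ext_iff.mp h2 (Sum.inl 1)
    refine Subtype.ext (Prod.ext ?_ ?_)
    · simpa [jperm₁] using e1
    · simpa using e2
  · rintro ⟨⟨⟨e₁, he₁⟩, ⟨e₂, he₂⟩⟩, hcomm⟩
    obtain ⟨b, hb⟩ := relAut₂_eq H he₂
    set a : G₁ := (e₁ 1)⁻¹ with ha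
    have he₁' : e₁ = jperm₁ a := relAut₁_eq (G₂ := G₂) he₁
    have hmem : ((a, b) : G₁ × G₂) ∈ H := by
      have h0 := hcomm 1
      simp only at h0
      rw [he₁', hb] at h0
      have h0' : (QuotientGroup.mk ((1 * a⁻¹, 1) : G₁ × G₂) : (G₁ × G₂) ⧸ H)
          = QuotientGroup.mk ((((1:G₁), b) : G₁ × G₂) * (1, 1)) := by
        exact Sum.inr.inj h0
      rw [QuotientGroup.eq] at h0'
      have : ((1 * a⁻¹, (1:G₂)) : G₁ × G₂)⁻¹ * ((((1:G₁), b) : G₁ × G₂) * (1, 1)) = (a, b) := by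
        ext <;> simp
      rwa [this] at h0'
    refine ⟨⟨(a, b), hmem⟩, ?_⟩
    refine Subtype.ext (Prod.ext (Subtype.ext ?_) (Subtype.ext ?_))
    · exact he₁'.symm
    · exact hb.symm

end Iso

/-- **Realisability in the arrow category of binary relational systems.**
For arbitrary groups `G₁`, `G₂` and any subgroup `H ≤ G₁ × G₂`, there exist a label set `I`,
binary relational systems `R₁`, `R₂` over `I` and a morphism `φ : R₁ → R₂` of `I`-systems
with `Aut_I(R₁) ≅ G₁`, `Aut_I(R₂) ≅ G₂` and `Aut_I(φ) ≅ H`. -/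
theorem arrow_realisability_in_relational_systems (G₁ G₂ : Type u) [Group G₁] [Group G₂]
    (H : Subgroup (G₁ × G₂)) :
    ∃ (I V₁ V₂ : Type u) (R₁ : I → V₁ → V₁ → Prop) (R₂ : I → V₂ → V₂ → Prop) (φ : V₁ → V₂),
      (∀ i v w, R₁ i v w → R₂ i (φ v) (φ w)) ∧
      Nonempty (relAut R₁ ≃* G₁) ∧ Nonempty (relAut R₂ ≃* G₂) ∧
      Nonempty (relArrowAut R₁ R₂ φ ≃* H) := by
  refine ⟨(G₁ ⊕ G₂) ⊕ G₁, G₁, G₂ ⊕ ((G₁ × G₂) ⧸ H), arrR₁ G₂, arrR₂ H, arrPhi H, ?_, ?_, ?_, ?_⟩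
  · intro i v w h
    rcases i with (g | h') | g
    · show (QuotientGroup.mk ((w, 1) : G₁ × G₂) : (G₁ × G₂) ⧸ H)
        = QuotientGroup.mk ((g, (1:G₂)) * ((v, 1) : G₁ × G₂))
      have hw : w = g * v := h
      subst hw
      congr 1
      ext <;> simp
    · exact absurd h id
    · exact absurd h id
  · exact ⟨(MulEquiv.ofBijective (hom₁ (G₂ := G₂)) hom₁_bij).symm⟩
  · exact ⟨(MulEquiv.ofBijective (hom₂ H) (hom₂_bij H)).symm⟩
  · exact ⟨(MulEquiv.ofBijective (hom₃ H) (hom₃_bij H)).symm⟩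
end

section
/- Let φ' : S₁ → S₂ be a morphism of I-systems between two systems satisfying the replacement hypotheses (with the same family of graphs R_i). Then the map φ : Γ(S₁) → Γ(S₂) defined by φ(v) = φ'(v) for v ∈ V(S₁), φ(r_i^{(v,w)}) = r_i^{(φ'(v), φ'(w))}, and the identity of R_i on each copy R_i^{(v,w)} → R_i^{(φ'(v), φ'(w))}, is a graph homomorphism, and Aut(φ) is isomorphic to Aut_I(φ'): a pair of graph automorphisms of Γ(S₁) and Γ(S₂) commutes with φ if and only if the pair of their restrictions to V(S₁) and V(S₂) commutes with φ'. -/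
universe u

/-- The outdegree of a vertex in a binary relational system: the cardinality of the
disjoint union over the labels `i ∈ I` of the sets `{w | (v, w) ∈ R_i}`. -/
def relOutDeg {I V : Type u} (R : I → V → V → Prop) (v : V) : Cardinal.{u} :=
  Cardinal.mk (Σ i : I, {w : V // R i v w})

/-- The indegree of a vertex in a binary relational system: the cardinality of the
disjoint union over the labels `i ∈ I` of the sets `{w | (w, v) ∈ R_i}`. -/
def relInDeg {I V : Type u} (R : I → V → V → Prop) (v : V) : Cardinal.{u} :=
  Cardinal.mk (Σ i : I, {w : V // R i w v})

/-- The degree of a vertex in a binary relational system. -/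
def relDeg {I V : Type u} (R : I → V → V → Prop) (v : V) : Cardinal.{u} :=
  relOutDeg R v + relInDeg R v


section Replacement

variable {I V : Type u} (S : I → V → V → Prop)
variable (X : I → Type u) (Gr : ∀ i, SimpleGraph (X i)) (p : ∀ i, X i)

/-- The vertex set of the replacement graph `Γ(S)`: the vertices of `S` together with, for
each edge `(v, w)` of label `i`, a copy of the vertices of `R_i` (the `some x` vertices)
and an extra vertex `r_i^{(v,w)}` (the `none` vertex). -/
abbrev RepVert (X : I → Type u) := V ⊕ Σ i : I, {e : V × V // S i e.1 e.2} × Option (X i)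

/-- The adjacency relation of the replacement graph, consisting of: the edges of each copy
`R_i^{(v,w)}`, and the connecting edges `{v, r_i^{(v,w)}}`, `{r_i^{(v,w)}, p_i^{(v,w)}}` and
`{p_i^{(v,w)}, w}` for each edge `(v, w)` of label `i` of `S`. -/
inductive RepAdj : RepVert S X → RepVert S X → Prop
  | copy (i : I) (e : {e : V × V // S i e.1 e.2}) {x y : X i} :
      (Gr i).Adj x y → RepAdj (.inr ⟨i, e, some x⟩) (.inr ⟨i, e, some y⟩)
  | rp (i : I) (e : {e : V × V // S i e.1 e.2}) :
      RepAdj (.inr ⟨i, e, none⟩) (.inr ⟨i, e, some (p i)⟩)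
  | pr (i : I) (e : {e : V × V // S i e.1 e.2}) :
      RepAdj (.inr ⟨i, e, some (p i)⟩) (.inr ⟨i, e, none⟩)
  | vr (i : I) (e : {e : V × V // S i e.1 e.2}) :
      RepAdj (.inl e.val.1) (.inr ⟨i, e, none⟩)
  | rv (i : I) (e : {e : V × V // S i e.1 e.2}) :
      RepAdj (.inr ⟨i, e, none⟩) (.inl e.val.1)
  | pw (i : I) (e : {e : V × V // S i e.1 e.2}) :
      RepAdj (.inr ⟨i, e, some (p i)⟩) (.inl e.val.2)
  | wp (i : I) (e : {e : V × V // S i e.1 e.2}) :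
      RepAdj (.inl e.val.2) (.inr ⟨i, e, some (p i)⟩)

/-- The replacement graph `Γ(S)` obtained from the `I`-system `S` by the replacement
operation with the family of graphs `(R_i, p_i)`. -/
def repGraph : SimpleGraph (RepVert S X) where
  Adj := RepAdj S X Gr p
  symm := by
    constructor
    intro a b h
    cases h with
    | copy i e hxy => exact .copy i e ((Gr i).symm.symm _ _ hxy)
    | rp i e => exact .pr i e
    | pr i e => exact .rp i e
    | vr i e => exact .rv i e
    | rv i e => exact .vr i e
    | pw i e => exact .wp i e
    | wp i e => exact .pw i e
  loopless := by
    constructor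
    intro a h
    cases h with
    | copy i e hxy => exact (Gr i).loopless.irrefl _ hxy

end Replacement

/-- The graph homomorphism `Γ(S₁) → Γ(S₂)` induced by a morphism `φ'` of `I`-systems:
a vertex `v` of `S₁` goes to `φ'(v)`, the vertex `r_i^{(v,w)}` goes to
`r_i^{(φ'(v), φ'(w))}`, and each copy `R_i^{(v,w)}` maps identically onto
`R_i^{(φ'(v), φ'(w))}`. -/
def repMap {I V₁ V₂ : Type u} (S₁ : I → V₁ → V₁ → Prop) (S₂ : I → V₂ → V₂ → Prop)
    (X : I → Type u) (φ' : V₁ → V₂) (hφ : ∀ i v w, S₁ i v w → S₂ i (φ' v) (φ' w)) :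
    RepVert S₁ X → RepVert S₂ X
  | .inl v => .inl (φ' v)
  | .inr ⟨i, e, c⟩ => .inr ⟨i, ⟨(φ' e.val.1, φ' e.val.2), hφ i e.val.1 e.val.2 e.2⟩, c⟩

theorem Equiv.Perm.apply_inv_self {α : Type*} (f : Equiv.Perm α) (x : α) : f (f⁻¹ x) = x :=
  f.apply_symm_apply x

theorem Equiv.Perm.inv_apply_self {α : Type*} (f : Equiv.Perm α) (x : α) : f⁻¹ (f x) = x :=
  f.symm_apply_apply x

section AuxRep
open Sum

variable {I V : Type u} {S : I → V → V → Prop}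
  {X : I → Type u} {Gr : ∀ i, SimpleGraph (X i)} {p : ∀ i, X i}

lemma rep_inr_eq {i j : I} {e : {e : V × V // S i e.1 e.2}} {f : {e : V × V // S j e.1 e.2}}
    {c : Option (X i)} {d : Option (X j)}
    (h : (inr ⟨i, e, c⟩ : RepVert S X) = inr ⟨j, f, d⟩) :
    ∃ hij : i = j, e.val = f.val ∧ hij ▸ c = d := by
  injection h with h
  obtain ⟨rfl, h2⟩ := Sigma.mk.inj_iff.mp h
  obtain ⟨h3, h4⟩ := Prod.mk_inj.mp (eq_of_heq h2)
  exact ⟨rfl, Subtype.ext_iff.mp h3, h4⟩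

lemma rep_inr_eq_same {i : I} {e f : {e : V × V // S i e.1 e.2}} {c d : Option (X i)}
    (h : (inr ⟨i, e, c⟩ : RepVert S X) = inr ⟨i, f, d⟩) : e = f ∧ c = d := by
  obtain ⟨hij, h1, h2⟩ := rep_inr_eq h
  exact ⟨Subtype.ext h1, h2⟩

lemma rep_some_ne_none {i j : I} {e : {e : V × V // S i e.1 e.2}}
    {f : {e : V × V // S j e.1 e.2}} {x : X i} :
    (inr ⟨i, e, some x⟩ : RepVert S X) ≠ inr ⟨j, f, none⟩ := by
  intro h
  obtain ⟨rfl, -, h2⟩ := rep_inr_eq h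
  exact Option.some_ne_none x h2

lemma rep_inr_some_eq {i j : I} {e : {e : V × V // S i e.1 e.2}}
    {f : {e : V × V // S j e.1 e.2}} {x : X i} {y : X j}
    (h : (inr ⟨i, e, some x⟩ : RepVert S X) = inr ⟨j, f, some y⟩) :
    ∃ hij : i = j, e.val = f.val ∧ hij ▸ x = y := by
  obtain ⟨rfl, h1, h2⟩ := rep_inr_eq h
  exact ⟨rfl, h1, Option.some.inj h2⟩

lemma rep_adj_none {i : I} {e : {e : V × V // S i e.1 e.2}} {b : RepVert S X} :
    (repGraph S X Gr p).Adj (inr ⟨i, e, none⟩) b ↔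
      b = inl e.val.1 ∨ b = inr ⟨i, e, some (p i)⟩ := by
  constructor
  · intro h
    cases h with
    | rp => right; rfl
    | rv => left; rfl
  · rintro (rfl | rfl)
    · exact .rv i e
    · exact .rp i e

lemma rep_adj_some {i : I} {e : {e : V × V // S i e.1 e.2}} {x : X i} {b : RepVert S X} :
    (repGraph S X Gr p).Adj (inr ⟨i, e, some x⟩) b ↔
      (∃ y, (Gr i).Adj x y ∧ b = inr ⟨i, e, some y⟩) ∨
      (x = p i ∧ (b = inr ⟨i, e, none⟩ ∨ b = inl e.val.2)) := by
  constructor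
  · intro h
    cases h with
    | copy _ _ hxy => exact Or.inl ⟨_, hxy, rfl⟩
    | pr => exact Or.inr ⟨rfl, Or.inl rfl⟩
    | pw => exact Or.inr ⟨rfl, Or.inr rfl⟩
  · rintro (⟨y, hxy, rfl⟩ | ⟨rfl, rfl | rfl⟩)
    · exact .copy i e hxy
    · exact .pr i e
    · exact .pw i e

lemma rep_adj_inl {v : V} {b : RepVert S X} :
    (repGraph S X Gr p).Adj (inl v) b ↔
      (∃ i, ∃ w, ∃ h : S i v w, b = inr ⟨i, ⟨(v, w), h⟩, none⟩) ∨
      (∃ i, ∃ u, ∃ h : S i u v, b = inr ⟨i, ⟨(u, v), h⟩, some (p i)⟩) := by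
  constructor
  · intro h
    cases h with
    | vr i e => exact Or.inl ⟨i, e.val.2, e.2, rfl⟩
    | wp i e => exact Or.inr ⟨i, e.val.1, e.2, rfl⟩
  · rintro (⟨i, w, h, rfl⟩ | ⟨i, u, h, rfl⟩)
    · exact .vr i ⟨(v, w), h⟩
    · exact .wp i ⟨(u, v), h⟩

end AuxRep
section AuxDeg
open Sum

variable {I V : Type u} {S : I → V → V → Prop}
  {X : I → Type u} {Gr : ∀ i, SimpleGraph (X i)} {p : ∀ i, X i}

lemma rep_deg_none {i : I} (e : {e : V × V // S i e.1 e.2}) :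
    Cardinal.mk ((repGraph S X Gr p).neighborSet (inr ⟨i, e, none⟩)) = 2 := by
  have hset : (repGraph S X Gr p).neighborSet (inr ⟨i, e, none⟩) =
      {inl e.val.1, inr ⟨i, e, some (p i)⟩} := Set.ext fun b => rep_adj_none
  rw [hset, Cardinal.mk_insert (by simp), Cardinal.mk_singleton, one_add_one_eq_two]

lemma rep_deg_pcopy {i : I} (hp : Cardinal.mk ((Gr i).neighborSet (p i)) = 1)
    (e : {e : V × V // S i e.1 e.2}) :
    Cardinal.mk ((repGraph S X Gr p).neighborSet (inr ⟨i, e, some (p i)⟩)) = 3 := by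
  rw [Cardinal.eq_one_iff_unique] at hp
  obtain ⟨hsub, ⟨q, hq⟩⟩ := hp
  have hq' : ∀ y, (Gr i).Adj (p i) y ↔ y = q := by
    intro y
    constructor
    · intro hy
      have := @Subsingleton.elim _ hsub ⟨y, hy⟩ ⟨q, hq⟩
      exact Subtype.mk.inj this
    · rintro rfl; exact hq
  have hset : (repGraph S X Gr p).neighborSet (inr ⟨i, e, some (p i)⟩) =
      {inr ⟨i, e, some q⟩, inr ⟨i, e, none⟩, inl e.val.2} := by
    ext b
    change (repGraph S X Gr p).Adj _ b ↔ _
    rw [rep_adj_some]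
    simp only [Set.mem_insert_iff, Set.mem_singleton_iff]
    constructor
    · rintro (⟨y, hy, rfl⟩ | ⟨-, rfl | rfl⟩)
      · rw [hq' y] at hy; subst hy; exact Or.inl rfl
      · exact Or.inr (Or.inl rfl)
      · exact Or.inr (Or.inr rfl)
    · rintro (rfl | rfl | rfl)
      · exact Or.inl ⟨q, hq, rfl⟩
      · exact Or.inr ⟨trivial, Or.inl rfl⟩
      · exact Or.inr ⟨trivial, Or.inr rfl⟩
  rw [hset]
  rw [Cardinal.mk_insert, Cardinal.mk_insert (by simp), Cardinal.mk_singleton]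
  · norm_num
  · simp only [Set.mem_insert_iff, Set.mem_singleton_iff]
    push_neg
    exact ⟨fun h => rep_some_ne_none h, by simp⟩

lemma rep_deg_some {i : I} {x : X i} (hx : x ≠ p i) (e : {e : V × V // S i e.1 e.2}) :
    Cardinal.mk ((repGraph S X Gr p).neighborSet (inr ⟨i, e, some x⟩)) =
      Cardinal.mk ((Gr i).neighborSet x) := by
  have hset : (repGraph S X Gr p).neighborSet (inr ⟨i, e, some x⟩) =
      (fun y => (inr ⟨i, e, some y⟩ : RepVert S X)) '' ((Gr i).neighborSet x) := by
    ext b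
    change (repGraph S X Gr p).Adj _ b ↔ _
    rw [rep_adj_some]
    constructor
    · rintro (⟨y, hy, rfl⟩ | ⟨h, -⟩)
      · exact ⟨y, hy, rfl⟩
      · exact absurd h hx
    · rintro ⟨y, hy, rfl⟩
      exact Or.inl ⟨y, hy, rfl⟩
  rw [hset]
  apply Cardinal.mk_image_eq
  intro y z h
  exact (rep_inr_eq_same h).2 |> Option.some.inj

lemma rep_deg_inl (v : V) :
    Cardinal.mk ((repGraph S X Gr p).neighborSet (inl v : RepVert S X)) = relDeg S v := by
  classical
  set f : (Σ i : I, {w : V // S i v w}) → RepVert S X :=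
    fun q => inr ⟨q.1, ⟨(v, q.2.val), q.2.2⟩, none⟩ with hf
  set g : (Σ i : I, {w : V // S i w v}) → RepVert S X :=
    fun q => inr ⟨q.1, ⟨(q.2.val, v), q.2.2⟩, some (p q.1)⟩ with hg
  have hset : (repGraph S X Gr p).neighborSet (inl v : RepVert S X) =
      Set.range f ∪ Set.range g := by
    ext b
    change (repGraph S X Gr p).Adj _ b ↔ _
    rw [rep_adj_inl]
    constructor
    · rintro (⟨i, w, h, rfl⟩ | ⟨i, u, h, rfl⟩)
      · exact Or.inl ⟨⟨i, w, h⟩, rfl⟩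
      · exact Or.inr ⟨⟨i, u, h⟩, rfl⟩
    · rintro (⟨⟨i, w, h⟩, rfl⟩ | ⟨⟨i, u, h⟩, rfl⟩)
      · exact Or.inl ⟨i, w, h, rfl⟩
      · exact Or.inr ⟨i, u, h, rfl⟩
  have hdisj : Disjoint (Set.range f) (Set.range g) := by
    rw [Set.disjoint_iff_inter_eq_empty]
    ext b
    simp only [Set.mem_inter_iff, Set.mem_range, Set.mem_empty_iff_false, iff_false, not_and]
    rintro ⟨⟨i, w, h⟩, rfl⟩ ⟨⟨j, u, h'⟩, hb⟩
    exact rep_some_ne_none hb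
  have hfinj : Function.Injective f := by
    rintro ⟨i, w, h⟩ ⟨j, w', h'⟩ hfe
    obtain ⟨hij, h1, h2⟩ := rep_inr_eq hfe
    have hij' : i = j := hij
    subst hij'
    have hw : w = w' := congrArg Prod.snd h1
    subst hw; rfl
  have hginj : Function.Injective g := by
    rintro ⟨i, w, h⟩ ⟨j, w', h'⟩ hfe
    obtain ⟨hij, h1, h2⟩ := rep_inr_eq hfe
    have hij' : i = j := hij
    subst hij'
    have hw : w = w' := congrArg Prod.fst h1
    subst hw; rfl
  rw [hset, Cardinal.mk_union_of_disjoint hdisj, Cardinal.mk_range_eq f hfinj,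
    Cardinal.mk_range_eq g hginj]
  rfl

lemma aut_deg {W : Type u} {G : SimpleGraph W} {ψ : Equiv.Perm W} (hψ : ψ ∈ graphAut G)
    (a : W) : Cardinal.mk (G.neighborSet (ψ a)) = Cardinal.mk (G.neighborSet a) :=
  (Cardinal.mk_congr (Equiv.subtypeEquiv ψ fun b => hψ a b)).symm

end AuxDeg
section AuxClassify
open Sum

variable {I V : Type u} {S : I → V → V → Prop}
  {X : I → Type u} {Gr : ∀ i, SimpleGraph (X i)} {p : ∀ i, X i} {α : Cardinal.{u}}

/-- The degree of any vertex of the form `inr ⟨j, f, c⟩` differs from `relDeg`s. -/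
lemma rep_aut_inl (hα : 4 ≤ α)
    (hp : ∀ i, Cardinal.mk ((Gr i).neighborSet (p i)) = 1)
    (hbig : ∀ (i : I) (x : X i), x ≠ p i → α < Cardinal.mk ((Gr i).neighborSet x))
    (hdeg : ∀ v : V, 4 ≤ relDeg S v ∧ relDeg S v ≤ α)
    {ψ : Equiv.Perm (RepVert S X)} (hψ : ψ ∈ graphAut (repGraph S X Gr p)) (v : V) :
    ∃ v', ψ (inl v) = inl v' := by
  have key : Cardinal.mk ((repGraph S X Gr p).neighborSet (ψ (inl v))) = relDeg S v := by
    rw [aut_deg hψ, rep_deg_inl]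
  rcases h : ψ (inl v) with v' | ⟨j, f, c⟩
  · exact ⟨v', rfl⟩
  · rw [h] at key
    exfalso
    rcases c with - | x
    · rw [rep_deg_none] at key
      exact absurd (key ▸ (hdeg v).1) (by norm_num)
    · by_cases hx : x = p j
      · subst hx
        rw [rep_deg_pcopy (hp j)] at key
        exact absurd (key ▸ (hdeg v).1) (by norm_num)
      · rw [rep_deg_some hx] at key
        exact absurd ((key ▸ hbig j x hx).trans_le (hdeg v).2) (lt_irrefl α)

lemma rep_aut_none (hα : 4 ≤ α)
    (hp : ∀ i, Cardinal.mk ((Gr i).neighborSet (p i)) = 1)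
    (hbig : ∀ (i : I) (x : X i), x ≠ p i → α < Cardinal.mk ((Gr i).neighborSet x))
    (hdeg : ∀ v : V, 4 ≤ relDeg S v ∧ relDeg S v ≤ α)
    {ψ : Equiv.Perm (RepVert S X)} (hψ : ψ ∈ graphAut (repGraph S X Gr p))
    (i : I) (e : {e : V × V // S i e.1 e.2}) :
    ∃ j f, ψ (inr ⟨i, e, none⟩) = inr ⟨j, f, none⟩ := by
  have key : Cardinal.mk ((repGraph S X Gr p).neighborSet (ψ (inr ⟨i, e, none⟩))) = 2 := by
    rw [aut_deg hψ, rep_deg_none]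
  rcases h : ψ (inr ⟨i, e, none⟩) with v' | ⟨j, f, c⟩
  · rw [h, rep_deg_inl] at key
    exact absurd (key ▸ (hdeg v').1) (by norm_num)
  · rw [h] at key
    rcases c with - | x
    · exact ⟨j, f, rfl⟩
    · exfalso
      by_cases hx : x = p j
      · subst hx
        rw [rep_deg_pcopy (hp j)] at key
        exact absurd key (by norm_num)
      · rw [rep_deg_some hx] at key
        have h2 : (2 : Cardinal) < α := lt_of_lt_of_le (by norm_num) hα
        exact absurd (key ▸ hbig j x hx) (lt_asymm h2)

lemma rep_aut_some (hα : 4 ≤ α)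
    (hp : ∀ i, Cardinal.mk ((Gr i).neighborSet (p i)) = 1)
    (hbig : ∀ (i : I) (x : X i), x ≠ p i → α < Cardinal.mk ((Gr i).neighborSet x))
    (hdeg : ∀ v : V, 4 ≤ relDeg S v ∧ relDeg S v ≤ α)
    {ψ : Equiv.Perm (RepVert S X)} (hψ : ψ ∈ graphAut (repGraph S X Gr p))
    (i : I) (e : {e : V × V // S i e.1 e.2}) (x : X i) :
    ∃ j f y, ψ (inr ⟨i, e, some x⟩) = inr ⟨j, f, some y⟩ := by
  have key : Cardinal.mk ((repGraph S X Gr p).neighborSet (ψ (inr ⟨i, e, some x⟩)))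
      = Cardinal.mk ((repGraph S X Gr p).neighborSet (inr ⟨i, e, some x⟩ : RepVert S X)) :=
    aut_deg hψ _
  rcases h : ψ (inr ⟨i, e, some x⟩) with v' | ⟨j, f, c⟩
  all_goals rw [h] at key
  · exfalso
    rw [rep_deg_inl] at key
    by_cases hx : x = p i
    · subst hx
      rw [rep_deg_pcopy (hp i)] at key
      exact absurd (key ▸ (hdeg v').1) (by norm_num)
    · rw [rep_deg_some hx] at key
      exact absurd ((key.symm ▸ hbig i x hx).trans_le (hdeg v').2) (lt_irrefl α)
  · rcases c with - | y
    · exfalso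
      rw [rep_deg_none] at key
      by_cases hx : x = p i
      · subst hx
        rw [rep_deg_pcopy (hp i)] at key
        exact absurd key (by norm_num)
      · rw [rep_deg_some hx] at key
        have h2 : (2 : Cardinal) < α := lt_of_lt_of_le (by norm_num) hα
        exact absurd (key.symm ▸ hbig i x hx) (lt_asymm h2)
    · exact ⟨j, f, y, rfl⟩

end AuxClassify
section AuxKey
open Sum

variable {I V : Type u} {S : I → V → V → Prop}
  {X : I → Type u} {Gr : ∀ i, SimpleGraph (X i)} {p : ∀ i, X i} {α : Cardinal.{u}}

lemma rep_adj_some_some {i : I} {e : {e : V × V // S i e.1 e.2}} {x y : X i} :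
    (repGraph S X Gr p).Adj (inr ⟨i, e, some x⟩) (inr ⟨i, e, some y⟩) ↔ (Gr i).Adj x y := by
  constructor
  · intro h
    rcases rep_adj_some.mp h with ⟨z, hz, heq⟩ | ⟨-, heq | heq⟩
    · obtain ⟨-, hzy⟩ := rep_inr_eq_same heq.symm
      rwa [Option.some.inj hzy] at hz
    · exact absurd heq (by simp)
    · exact absurd heq (by simp)
  · exact fun h => .copy i e h

lemma rep_gadget_step (hα : 4 ≤ α)
    (hp : ∀ i, Cardinal.mk ((Gr i).neighborSet (p i)) = 1)
    (hbig : ∀ (i : I) (x : X i), x ≠ p i → α < Cardinal.mk ((Gr i).neighborSet x))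
    (hdeg : ∀ v : V, 4 ≤ relDeg S v ∧ relDeg S v ≤ α)
    {ψ : Equiv.Perm (RepVert S X)} (hψ : ψ ∈ graphAut (repGraph S X Gr p))
    {i j : I} {e : {e : V × V // S i e.1 e.2}} {f : {e : V × V // S j e.1 e.2}}
    {u b : X i} {y : X j} (hub : (Gr i).Adj u b)
    (hy : ψ (inr ⟨i, e, some u⟩) = inr ⟨j, f, some y⟩) :
    ∃ z, ψ (inr ⟨i, e, some b⟩) = inr ⟨j, f, some z⟩ := by
  have hadj : (repGraph S X Gr p).Adj (inr ⟨i, e, some u⟩) (inr ⟨i, e, some b⟩) :=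
    .copy i e hub
  have h2 := (hψ _ _).mp hadj
  rw [hy] at h2
  obtain ⟨k, g, z, hz⟩ := rep_aut_some hα hp hbig hdeg hψ i e b
  rw [hz] at h2
  rcases rep_adj_some.mp h2 with ⟨z', hz', heq⟩ | ⟨-, heq | heq⟩
  · obtain ⟨hkj, hgf, hzz⟩ := rep_inr_some_eq heq
    subst hkj
    obtain rfl : g = f := Subtype.ext hgf
    exact ⟨z, hz⟩
  · exact absurd heq rep_some_ne_none
  · exact absurd heq (by simp)

lemma rep_gadget_walk (hα : 4 ≤ α)
    (hconn : ∀ i, (Gr i).Connected)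
    (hp : ∀ i, Cardinal.mk ((Gr i).neighborSet (p i)) = 1)
    (hbig : ∀ (i : I) (x : X i), x ≠ p i → α < Cardinal.mk ((Gr i).neighborSet x))
    (hdeg : ∀ v : V, 4 ≤ relDeg S v ∧ relDeg S v ≤ α)
    {ψ : Equiv.Perm (RepVert S X)} (hψ : ψ ∈ graphAut (repGraph S X Gr p))
    {i j : I} {e : {e : V × V // S i e.1 e.2}} {f : {e : V × V // S j e.1 e.2}}
    (hbase : ψ (inr ⟨i, e, some (p i)⟩) = inr ⟨j, f, some (p j)⟩) (x : X i) :
    ∃ y, ψ (inr ⟨i, e, some x⟩) = inr ⟨j, f, some y⟩ := by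
  have hwalk : ∀ (u x : X i), (Gr i).Walk u x →
      (∃ y, ψ (inr ⟨i, e, some u⟩) = inr ⟨j, f, some y⟩) →
      ∃ y, ψ (inr ⟨i, e, some x⟩) = inr ⟨j, f, some y⟩ := by
    intro u x w
    induction w with
    | nil => exact id
    | cons h q ih =>
      rintro ⟨y, hy⟩
      exact ih (rep_gadget_step hα hp hbig hdeg hψ h hy)
  exact hwalk (p i) x ((hconn i).preconnected (p i) x).some ⟨p j, hbase⟩

end AuxKey
section AuxKeyDet
open Sum

variable {I V : Type u} {S : I → V → V → Prop}
  {X : I → Type u} {Gr : ∀ i, SimpleGraph (X i)} {p : ∀ i, X i} {α : Cardinal.{u}}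

lemma rep_keyDet (hα : 4 ≤ α)
    (hconn : ∀ i, (Gr i).Connected)
    (hp : ∀ i, Cardinal.mk ((Gr i).neighborSet (p i)) = 1)
    (hbig : ∀ (i : I) (x : X i), x ≠ p i → α < Cardinal.mk ((Gr i).neighborSet x))
    (hrigid : ∀ (i : I) (φ : Gr i ≃g Gr i) (x : X i), φ x = x)
    (hdist : ∀ i j : I, i ≠ j → IsEmpty (Gr i ≃g Gr j))
    (hdeg : ∀ v : V, 4 ≤ relDeg S v ∧ relDeg S v ≤ α)
    {ψ : Equiv.Perm (RepVert S X)} (hψ : ψ ∈ graphAut (repGraph S X Gr p))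
    (σ : Equiv.Perm V) (hσ : ∀ v, ψ (inl v) = inl (σ v))
    (i : I) (e : {e : V × V // S i e.1 e.2}) :
    ∃ hs : S i (σ e.val.1) (σ e.val.2), ∀ c : Option (X i),
      ψ (inr ⟨i, e, c⟩) = inr ⟨i, ⟨(σ e.val.1, σ e.val.2), hs⟩, c⟩ := by
  classical
  obtain ⟨j, f, hnone⟩ := rep_aut_none hα hp hbig hdeg hψ i e
  have hf1 : f.val.1 = σ e.val.1 := by
    have hadj : (repGraph S X Gr p).Adj (inr ⟨i, e, none⟩) (inl e.val.1) := .rv i e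
    have h1 := (hψ _ _).mp hadj
    rw [hnone, hσ] at h1
    rcases rep_adj_none.mp h1 with h | h
    · exact (inl.inj h).symm
    · exact absurd h (by simp)
  have hpc : ψ (inr ⟨i, e, some (p i)⟩) = inr ⟨j, f, some (p j)⟩ := by
    have hadj : (repGraph S X Gr p).Adj (inr ⟨i, e, none⟩) (inr ⟨i, e, some (p i)⟩) := .rp i e
    have h2 := (hψ _ _).mp hadj
    rw [hnone] at h2
    obtain ⟨k, g, y, hy⟩ := rep_aut_some hα hp hbig hdeg hψ i e (p i)
    rw [hy] at h2
    rcases rep_adj_none.mp h2 with h | h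
    · exact absurd h (by simp)
    · obtain ⟨hkj, hgf, hyp⟩ := rep_inr_some_eq h
      subst hkj
      obtain rfl : g = f := Subtype.ext hgf
      have hyp' : y = p _ := hyp
      rw [hy, hyp']
  have hf2 : f.val.2 = σ e.val.2 := by
    have hadj : (repGraph S X Gr p).Adj (inr ⟨i, e, some (p i)⟩) (inl e.val.2) := .pw i e
    have h2 := (hψ _ _).mp hadj
    rw [hpc, hσ] at h2
    rcases rep_adj_some.mp h2 with ⟨z, hz, heq⟩ | ⟨-, heq | heq⟩
    · exact absurd heq (by simp)
    · exact absurd heq (by simp)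
    · exact (inl.inj heq).symm
  have hψinv : ψ⁻¹ ∈ graphAut (repGraph S X Gr p) := inv_mem hψ
  have hbaseinv : ψ⁻¹ (inr ⟨j, f, some (p j)⟩) = inr ⟨i, e, some (p i)⟩ := by
    rw [← hpc, Equiv.Perm.inv_apply_self]
  choose fc hfc using rep_gadget_walk hα hconn hp hbig hdeg hψ hpc
  choose gc hgc using rep_gadget_walk hα hconn hp hbig hdeg hψinv hbaseinv
  have gfc : ∀ x, gc (fc x) = x := by
    intro x
    have h := hgc (fc x)
    rw [← hfc x, Equiv.Perm.inv_apply_self] at h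
    obtain ⟨-, h2⟩ := rep_inr_eq_same h
    exact (Option.some.inj h2).symm
  have fgc : ∀ y, fc (gc y) = y := by
    intro y
    have h := hfc (gc y)
    rw [← hgc y, Equiv.Perm.apply_inv_self] at h
    obtain ⟨-, h2⟩ := rep_inr_eq_same h
    exact (Option.some.inj h2).symm
  have hadjiff : ∀ x y : X i, (Gr i).Adj x y ↔ (Gr j).Adj (fc x) (fc y) := by
    intro x y
    constructor
    · intro h
      have h2 := (hψ _ _).mp ((rep_adj_some_some (e := e)).mpr h)
      rw [hfc x, hfc y] at h2
      exact rep_adj_some_some.mp h2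
    · intro h
      have h2 := (hψinv _ _).mp ((rep_adj_some_some (e := f)).mpr h)
      rw [← hfc x, ← hfc y, Equiv.Perm.inv_apply_self, Equiv.Perm.inv_apply_self] at h2
      exact rep_adj_some_some.mp h2
  have hij : i = j := by
    by_contra hne
    exact (hdist i j hne).false ⟨⟨fc, gc, gfc, fgc⟩, fun {a b} => (hadjiff a b).symm⟩
  subst hij
  have hfc_id : ∀ x, fc x = x :=
    hrigid i ⟨⟨fc, gc, gfc, fgc⟩, fun {a b} => (hadjiff a b).symm⟩
  have hfval : f.val = (σ e.val.1, σ e.val.2) := Prod.ext hf1 hf2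
  have hs : S i (σ e.val.1) (σ e.val.2) := by
    have h := f.2
    rw [hfval] at h
    exact h
  refine ⟨hs, ?_⟩
  have hfeq : f = ⟨(σ e.val.1, σ e.val.2), hs⟩ := Subtype.ext hfval
  intro c
  rcases c with - | x
  · rw [hnone, hfeq]
  · rw [hfc x, hfc_id x, hfeq]

end AuxKeyDet
section AuxLift
open Sum

variable {I V : Type u} {S : I → V → V → Prop}
  {X : I → Type u} {Gr : ∀ i, SimpleGraph (X i)} {p : ∀ i, X i} {α : Cardinal.{u}}

lemma rep_inl_inv {ψ : Equiv.Perm (RepVert S X)} (σ : Equiv.Perm V)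
    (hσ : ∀ v, ψ (inl v) = inl (σ v)) (v : V) : ψ⁻¹ (inl v) = inl (σ⁻¹ v) := by
  have h := hσ (σ⁻¹ v)
  rw [Equiv.Perm.apply_inv_self] at h
  rw [← h, Equiv.Perm.inv_apply_self]

lemma rep_restrict (hα : 4 ≤ α)
    (hp : ∀ i, Cardinal.mk ((Gr i).neighborSet (p i)) = 1)
    (hbig : ∀ (i : I) (x : X i), x ≠ p i → α < Cardinal.mk ((Gr i).neighborSet x))
    (hdeg : ∀ v : V, 4 ≤ relDeg S v ∧ relDeg S v ≤ α)
    {ψ : Equiv.Perm (RepVert S X)} (hψ : ψ ∈ graphAut (repGraph S X Gr p)) :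
    ∃ σ : Equiv.Perm V, ∀ v, ψ (inl v) = inl (σ v) := by
  classical
  choose s hs using rep_aut_inl hα hp hbig hdeg hψ
  choose t ht using rep_aut_inl hα hp hbig hdeg (inv_mem hψ)
  refine ⟨⟨s, t, ?_, ?_⟩, hs⟩
  · intro v
    have h := ht (s v)
    rw [← hs v, Equiv.Perm.inv_apply_self] at h
    exact (inl.inj h).symm
  · intro v
    have h := hs (t v)
    rw [← ht v, Equiv.Perm.apply_inv_self] at h
    exact (inl.inj h).symm

lemma rep_restrict_relAut (hα : 4 ≤ α)
    (hconn : ∀ i, (Gr i).Connected)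
    (hp : ∀ i, Cardinal.mk ((Gr i).neighborSet (p i)) = 1)
    (hbig : ∀ (i : I) (x : X i), x ≠ p i → α < Cardinal.mk ((Gr i).neighborSet x))
    (hrigid : ∀ (i : I) (φ : Gr i ≃g Gr i) (x : X i), φ x = x)
    (hdist : ∀ i j : I, i ≠ j → IsEmpty (Gr i ≃g Gr j))
    (hdeg : ∀ v : V, 4 ≤ relDeg S v ∧ relDeg S v ≤ α)
    {ψ : Equiv.Perm (RepVert S X)} (hψ : ψ ∈ graphAut (repGraph S X Gr p))
    (σ : Equiv.Perm V) (hσ : ∀ v, ψ (inl v) = inl (σ v)) : σ ∈ relAut S := by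
  intro i v w
  constructor
  · intro h
    exact (rep_keyDet hα hconn hp hbig hrigid hdist hdeg hψ σ hσ i ⟨(v, w), h⟩).1
  · intro h
    have hh := (rep_keyDet hα hconn hp hbig hrigid hdist hdeg (inv_mem hψ) σ⁻¹
      (rep_inl_inv σ hσ) i ⟨(σ v, σ w), h⟩).1
    simpa using hh

/-- Congruence helper for `inr` vertices. -/
lemma rep_inr_congr {i : I} {a b : V × V} (ha : S i a.1 a.2) (hb : S i b.1 b.2)
    (h : a = b) (c : Option (X i)) :
    (inr ⟨i, ⟨a, ha⟩, c⟩ : RepVert S X) = inr ⟨i, ⟨b, hb⟩, c⟩ := by subst h; rfl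

/-- The lift of a map of `I`-systems to the replacement vertices. -/
def repLiftFun (σ : V → V) (hm : ∀ i v w, S i v w → S i (σ v) (σ w)) :
    RepVert S X → RepVert S X
  | .inl v => .inl (σ v)
  | .inr ⟨i, e, c⟩ => .inr ⟨i, ⟨(σ e.val.1, σ e.val.2), hm i _ _ e.2⟩, c⟩

lemma rep_lift_adj (σ : V → V) (hm : ∀ i v w, S i v w → S i (σ v) (σ w))
    {a b : RepVert S X} (h : (repGraph S X Gr p).Adj a b) :
    (repGraph S X Gr p).Adj (repLiftFun σ hm a) (repLiftFun σ hm b) := by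
  cases h with
  | copy i e hxy => exact .copy i _ hxy
  | rp i e => exact .rp i _
  | pr i e => exact .pr i _
  | vr i e => exact .vr i ⟨(σ e.val.1, σ e.val.2), hm i _ _ e.2⟩
  | rv i e => exact .rv i _
  | pw i e => exact .pw i _
  | wp i e => exact .wp i ⟨(σ e.val.1, σ e.val.2), hm i _ _ e.2⟩

lemma rep_lift_inv (σ τ : V → V) (hm : ∀ i v w, S i v w → S i (σ v) (σ w))
    (hm' : ∀ i v w, S i v w → S i (τ v) (τ w)) (hτ : ∀ v, τ (σ v) = v) (a : RepVert S X) :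
    repLiftFun τ hm' (repLiftFun σ hm a) = a := by
  rcases a with v | ⟨i, e, c⟩
  · show inl (τ (σ v)) = inl v
    rw [hτ]
  · have hval : ((τ (σ e.val.1), τ (σ e.val.2)) : V × V) = e.val := by
      rw [hτ, hτ]
    exact rep_inr_congr (hm' _ _ _ (hm _ _ _ e.2)) e.2 hval c

/-- The inverse-compatible morphism property for `σ⁻¹`. -/
lemma relAut_inv_mp (σ : Equiv.Perm V) (hσ : σ ∈ relAut S) :
    ∀ i v w, S i v w → S i (σ⁻¹ v) (σ⁻¹ w) := fun i v w h => by
  have hh := hσ i (σ⁻¹ v) (σ⁻¹ w)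
  simp only [Equiv.Perm.apply_inv_self] at hh
  exact hh.mpr h

/-- The lift of an automorphism of an `I`-system to the replacement graph. -/
def repLiftPerm (σ : Equiv.Perm V) (hσ : σ ∈ relAut S) : Equiv.Perm (RepVert S X) where
  toFun := repLiftFun (⇑σ) (fun i v w h => (hσ i v w).mp h)
  invFun := repLiftFun (⇑σ⁻¹) (relAut_inv_mp σ hσ)
  left_inv := rep_lift_inv (⇑σ) (⇑σ⁻¹) _ _ (fun v => Equiv.Perm.inv_apply_self σ v)
  right_inv := rep_lift_inv (⇑σ⁻¹) (⇑σ) _ _ (fun v => Equiv.Perm.apply_inv_self σ v)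

lemma rep_lift_mem (σ : Equiv.Perm V) (hσ : σ ∈ relAut S) :
    (repLiftPerm (X := X) σ hσ) ∈ graphAut (repGraph S X Gr p) := by
  intro a b
  constructor
  · exact fun h => rep_lift_adj (⇑σ) (fun i v w hh => (hσ i v w).mp hh) h
  · intro h
    have h2 := rep_lift_adj (Gr := Gr) (p := p) (⇑σ⁻¹) (relAut_inv_mp σ hσ) h
    have ha : repLiftFun (⇑σ⁻¹) (relAut_inv_mp σ hσ) ((repLiftPerm (X := X) σ hσ) a) = a :=
      rep_lift_inv (⇑σ) (⇑σ⁻¹) (fun i v w hh => (hσ i v w).mp hh) (relAut_inv_mp σ hσ)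
        (fun v => Equiv.Perm.inv_apply_self σ v) a
    have hb : repLiftFun (⇑σ⁻¹) (relAut_inv_mp σ hσ) ((repLiftPerm (X := X) σ hσ) b) = b :=
      rep_lift_inv (⇑σ) (⇑σ⁻¹) (fun i v w hh => (hσ i v w).mp hh) (relAut_inv_mp σ hσ)
        (fun v => Equiv.Perm.inv_apply_self σ v) b
    rwa [ha, hb] at h2

end AuxLift
/-- **Replacement for morphisms.** For a morphism `φ' : S₁ → S₂` of `I`-systems satisfying
the replacement hypotheses, the induced map `φ : Γ(S₁) → Γ(S₂)` is a graph homomorphism;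
a pair of graph automorphisms of `Γ(S₁)` and `Γ(S₂)` commutes with `φ` if and only if the
pair of their restrictions to `V(S₁)` and `V(S₂)` commutes with `φ'`, and
`Aut(φ) ≅ Aut_I(φ')`. -/
theorem replacement_arrow_automorphisms {I V₁ V₂ : Type u}
    (S₁ : I → V₁ → V₁ → Prop) (S₂ : I → V₂ → V₂ → Prop)
    (X : I → Type u) (Gr : ∀ i, SimpleGraph (X i)) (p : ∀ i, X i)
    (α : Cardinal.{u}) (hα : 4 ≤ α)
    (hconn : ∀ i, (Gr i).Connected)
    (hp : ∀ i, Cardinal.mk ((Gr i).neighborSet (p i)) = 1)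
    (hbig : ∀ (i : I) (x : X i), x ≠ p i → α < Cardinal.mk ((Gr i).neighborSet x))
    (hrigid : ∀ (i : I) (φ : Gr i ≃g Gr i) (x : X i), φ x = x)
    (hdist : ∀ i j : I, i ≠ j → IsEmpty (Gr i ≃g Gr j))
    (hdeg₁ : ∀ v : V₁, 4 ≤ relDeg S₁ v ∧ relDeg S₁ v ≤ α)
    (hdeg₂ : ∀ v : V₂, 4 ≤ relDeg S₂ v ∧ relDeg S₂ v ≤ α)
    (φ' : V₁ → V₂) (hφ : ∀ i v w, S₁ i v w → S₂ i (φ' v) (φ' w)) :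
    (∀ a b : RepVert S₁ X, (repGraph S₁ X Gr p).Adj a b →
        (repGraph S₂ X Gr p).Adj (repMap S₁ S₂ X φ' hφ a) (repMap S₁ S₂ X φ' hφ b)) ∧
    (∀ (ψ₁ : graphAut (repGraph S₁ X Gr p)) (ψ₂ : graphAut (repGraph S₂ X Gr p))
        (σ₁ : relAut S₁) (σ₂ : relAut S₂),
      (∀ v : V₁, (ψ₁ : Equiv.Perm (RepVert S₁ X)) (Sum.inl v)
          = Sum.inl ((σ₁ : Equiv.Perm V₁) v)) →
      (∀ v : V₂, (ψ₂ : Equiv.Perm (RepVert S₂ X)) (Sum.inl v)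
          = Sum.inl ((σ₂ : Equiv.Perm V₂) v)) →
      ((∀ a : RepVert S₁ X,
          repMap S₁ S₂ X φ' hφ ((ψ₁ : Equiv.Perm (RepVert S₁ X)) a)
            = (ψ₂ : Equiv.Perm (RepVert S₂ X)) (repMap S₁ S₂ X φ' hφ a)) ↔
        ∀ v : V₁, φ' ((σ₁ : Equiv.Perm V₁) v) = (σ₂ : Equiv.Perm V₂) (φ' v))) ∧
    Nonempty (graphArrowAut (repGraph S₁ X Gr p) (repGraph S₂ X Gr p)
        (repMap S₁ S₂ X φ' hφ) ≃* relArrowAut S₁ S₂ φ') := by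
  classical
  have part1 : ∀ a b : RepVert S₁ X, (repGraph S₁ X Gr p).Adj a b →
      (repGraph S₂ X Gr p).Adj (repMap S₁ S₂ X φ' hφ a) (repMap S₁ S₂ X φ' hφ b) := by
    intro a b h
    cases h with
    | copy i e hxy => exact .copy i _ hxy
    | rp i e => exact .rp i _
    | pr i e => exact .pr i _
    | vr i e => exact .vr i ⟨(φ' e.val.1, φ' e.val.2), hφ i _ _ e.2⟩
    | rv i e => exact .rv i _
    | pw i e => exact .pw i _
    | wp i e => exact .wp i ⟨(φ' e.val.1, φ' e.val.2), hφ i _ _ e.2⟩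
  have part2 : ∀ (ψ₁ : graphAut (repGraph S₁ X Gr p)) (ψ₂ : graphAut (repGraph S₂ X Gr p))
      (σ₁ : relAut S₁) (σ₂ : relAut S₂),
      (∀ v : V₁, (ψ₁ : Equiv.Perm (RepVert S₁ X)) (Sum.inl v)
          = Sum.inl ((σ₁ : Equiv.Perm V₁) v)) →
      (∀ v : V₂, (ψ₂ : Equiv.Perm (RepVert S₂ X)) (Sum.inl v)
          = Sum.inl ((σ₂ : Equiv.Perm V₂) v)) →
      ((∀ a : RepVert S₁ X,
          repMap S₁ S₂ X φ' hφ ((ψ₁ : Equiv.Perm (RepVert S₁ X)) a)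
            = (ψ₂ : Equiv.Perm (RepVert S₂ X)) (repMap S₁ S₂ X φ' hφ a)) ↔
        ∀ v : V₁, φ' ((σ₁ : Equiv.Perm V₁) v) = (σ₂ : Equiv.Perm V₂) (φ' v)) := by
    intro ψ₁ ψ₂ σ₁ σ₂ h₁ h₂
    constructor
    · intro H v
      have h := H (Sum.inl v)
      rw [h₁ v] at h
      have h' : (Sum.inl (φ' ((σ₁ : Equiv.Perm V₁) v)) : RepVert S₂ X)
          = (ψ₂ : Equiv.Perm (RepVert S₂ X)) (Sum.inl (φ' v)) := h
      rw [h₂ (φ' v)] at h'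
      exact Sum.inl.inj h'
    · intro H a
      rcases a with v | ⟨i, e, c⟩
      · rw [h₁ v]
        have hl : repMap S₁ S₂ X φ' hφ (Sum.inl ((σ₁ : Equiv.Perm V₁) v))
            = Sum.inl (φ' ((σ₁ : Equiv.Perm V₁) v)) := rfl
        have hrr : repMap S₁ S₂ X φ' hφ (Sum.inl v : RepVert S₁ X)
            = (Sum.inl (φ' v) : RepVert S₂ X) := rfl
        rw [hl, hrr, h₂ (φ' v)]
        exact congrArg Sum.inl (H v)
      · obtain ⟨hs₁, hc₁⟩ := rep_keyDet hα hconn hp hbig hrigid hdist hdeg₁ ψ₁.2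
          (σ₁ : Equiv.Perm V₁) h₁ i e
        obtain ⟨hs₂, hc₂⟩ := rep_keyDet hα hconn hp hbig hrigid hdist hdeg₂ ψ₂.2
          (σ₂ : Equiv.Perm V₂) h₂ i ⟨(φ' e.val.1, φ' e.val.2), hφ i _ _ e.2⟩
        rw [hc₁ c]
        refine Eq.trans ?_ (hc₂ c).symm
        exact rep_inr_congr (hφ i _ _ hs₁) hs₂
          (Prod.ext (H e.val.1) (H e.val.2)) c
  refine ⟨part1, part2, ?_⟩
  choose ext₁ hext₁ using fun ψ : graphAut (repGraph S₁ X Gr p) =>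
    rep_restrict hα hp hbig hdeg₁ ψ.2
  choose ext₂ hext₂ using fun ψ : graphAut (repGraph S₂ X Gr p) =>
    rep_restrict hα hp hbig hdeg₂ ψ.2
  have hrel₁ : ∀ ψ, ext₁ ψ ∈ relAut S₁ := fun ψ =>
    rep_restrict_relAut hα hconn hp hbig hrigid hdist hdeg₁ ψ.2 _ (hext₁ ψ)
  have hrel₂ : ∀ ψ, ext₂ ψ ∈ relAut S₂ := fun ψ =>
    rep_restrict_relAut hα hconn hp hbig hrigid hdist hdeg₂ ψ.2 _ (hext₂ ψ)
  let F : graphArrowAut (repGraph S₁ X Gr p) (repGraph S₂ X Gr p)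
      (repMap S₁ S₂ X φ' hφ) → relArrowAut S₁ S₂ φ' := fun q =>
    ⟨(⟨ext₁ q.val.1, hrel₁ q.val.1⟩, ⟨ext₂ q.val.2, hrel₂ q.val.2⟩),
      (part2 q.val.1 q.val.2 ⟨ext₁ q.val.1, hrel₁ q.val.1⟩ ⟨ext₂ q.val.2, hrel₂ q.val.2⟩
        (hext₁ q.val.1) (hext₂ q.val.2)).mp q.2⟩
  have hFmul : ∀ q r, F (q * r) = F q * F r := by
    intro q r
    apply Subtype.ext
    apply Prod.ext
    · apply Subtype.ext
      apply Equiv.ext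
      intro v
      apply Sum.inl_injective (α := V₁) (β := (Σ i : I, {e : V₁ × V₁ // S₁ i e.1 e.2} × Option (X i)))
      rw [← hext₁ ((q * r).val.1) v]
      have hmulapp : ((q * r).val.1 : Equiv.Perm (RepVert S₁ X)) (Sum.inl v)
          = (q.val.1 : Equiv.Perm (RepVert S₁ X))
            ((r.val.1 : Equiv.Perm (RepVert S₁ X)) (Sum.inl v)) := rfl
      rw [hmulapp, hext₁ r.val.1 v, hext₁ q.val.1 (ext₁ r.val.1 v)]
      rfl
    · apply Subtype.ext
      apply Equiv.ext
      intro v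
      apply Sum.inl_injective (α := V₂) (β := (Σ i : I, {e : V₂ × V₂ // S₂ i e.1 e.2} × Option (X i)))
      rw [← hext₂ ((q * r).val.2) v]
      have hmulapp : ((q * r).val.2 : Equiv.Perm (RepVert S₂ X)) (Sum.inl v)
          = (q.val.2 : Equiv.Perm (RepVert S₂ X))
            ((r.val.2 : Equiv.Perm (RepVert S₂ X)) (Sum.inl v)) := rfl
      rw [hmulapp, hext₂ r.val.2 v, hext₂ q.val.2 (ext₂ r.val.2 v)]
      rfl
  have hFinj : Function.Injective F := by
    intro q r hqr
    have e1 : ext₁ q.val.1 = ext₁ r.val.1 :=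
      congrArg (fun z => ((z : relArrowAut S₁ S₂ φ').val.1 : Equiv.Perm V₁)) hqr
    have e2 : ext₂ q.val.2 = ext₂ r.val.2 :=
      congrArg (fun z => ((z : relArrowAut S₁ S₂ φ').val.2 : Equiv.Perm V₂)) hqr
    apply Subtype.ext
    apply Prod.ext
    · apply Subtype.ext
      apply Equiv.ext
      intro a
      rcases a with v | ⟨i, e, c⟩
      · rw [hext₁ q.val.1 v, hext₁ r.val.1 v, e1]
      · obtain ⟨hsq, hcq⟩ := rep_keyDet hα hconn hp hbig hrigid hdist hdeg₁ q.val.1.2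
          (ext₁ q.val.1) (hext₁ q.val.1) i e
        obtain ⟨hsr, hcr⟩ := rep_keyDet hα hconn hp hbig hrigid hdist hdeg₁ r.val.1.2
          (ext₁ r.val.1) (hext₁ r.val.1) i e
        rw [hcq c, hcr c]
        exact rep_inr_congr hsq hsr (by rw [e1]) c
    · apply Subtype.ext
      apply Equiv.ext
      intro a
      rcases a with v | ⟨i, e, c⟩
      · rw [hext₂ q.val.2 v, hext₂ r.val.2 v, e2]
      · obtain ⟨hsq, hcq⟩ := rep_keyDet hα hconn hp hbig hrigid hdist hdeg₂ q.val.2.2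
          (ext₂ q.val.2) (hext₂ q.val.2) i e
        obtain ⟨hsr, hcr⟩ := rep_keyDet hα hconn hp hbig hrigid hdist hdeg₂ r.val.2.2
          (ext₂ r.val.2) (hext₂ r.val.2) i e
        rw [hcq c, hcr c]
        exact rep_inr_congr hsq hsr (by rw [e2]) c
  have hFsurj : Function.Surjective F := by
    rintro ⟨⟨σ₁, σ₂⟩, hr⟩
    have hr' : ∀ v, φ' ((σ₁ : Equiv.Perm V₁) v) = (σ₂ : Equiv.Perm V₂) (φ' v) := hr
    refine ⟨⟨(⟨repLiftPerm (X := X) (σ₁ : Equiv.Perm V₁) σ₁.2,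
        rep_lift_mem (Gr := Gr) (p := p) _ σ₁.2⟩,
      ⟨repLiftPerm (X := X) (σ₂ : Equiv.Perm V₂) σ₂.2,
        rep_lift_mem (Gr := Gr) (p := p) _ σ₂.2⟩), ?_⟩, ?_⟩
    · intro a
      rcases a with v | ⟨i, e, c⟩
      · exact congrArg Sum.inl (hr' v)
      · exact rep_inr_congr (hφ i _ _ ((σ₁.2 i _ _).mp e.2))
          ((σ₂.2 i _ _).mp (hφ i _ _ e.2))
          (Prod.ext (hr' e.val.1) (hr' e.val.2)) c
    · apply Subtype.ext
      apply Prod.ext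
      · apply Subtype.ext
        apply Equiv.ext
        intro v
        apply Sum.inl_injective (α := V₁)
          (β := (Σ i : I, {e : V₁ × V₁ // S₁ i e.1 e.2} × Option (X i)))
        rw [← hext₁ _ v]
        rfl
      · apply Subtype.ext
        apply Equiv.ext
        intro v
        apply Sum.inl_injective (α := V₂)
          (β := (Σ i : I, {e : V₂ × V₂ // S₂ i e.1 e.2} × Option (X i)))
        rw [← hext₂ _ v]
        rfl
  exact ⟨MulEquiv.ofBijective (MonoidHom.mk' F hFmul) ⟨hFinj, hFsurj⟩⟩
end
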